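/- Let U and V be disjoint finite nonempty index sets and K = U ∪ V, and let w_i > 0 and p_i > 0 for all i ∈ K. Then ( (∑_{i∈V} 1/w_i) · (∑_{i∈U} 1/(w_i² p_i)) ) / ( (∑_{i∈K} 1/w_i) · (∑_{i∈U} 1/w_i) ) ≤ ∑_{i∈V} 1/(p_i w_i) + ∑_{i∈U} [𝟙{p_i ≤ ∑_{j∈V} p_j} / (p_i w_i)] · ( (1/w_i) / (∑_{j∈U} 1/w_j) ), where 𝟙{·} is the indicator function. -/

import Mathlib

/-- Lemma A.9 (`app_resreg_main_decomp`): algebraic residual-regret splitting inequality. -/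
theorem residual_regret_split {ι : Type*} [DecidableEq ι]
    (U V : Finset ι) (hUV : Disjoint U V) (hU : U.Nonempty) (hV : V.Nonempty)
    (w p : ι → ℝ) (hw : ∀ i ∈ U ∪ V, 0 < w i) (hp : ∀ i ∈ U ∪ V, 0 < p i) :
    ((∑ i ∈ V, 1 / w i) * (∑ i ∈ U, 1 / ((w i) ^ 2 * p i))) /
        ((∑ i ∈ U ∪ V, 1 / w i) * (∑ i ∈ U, 1 / w i))
      ≤ (∑ i ∈ V, 1 / (p i * w i)) +
        ∑ i ∈ U, (if p i ≤ ∑ j ∈ V, p j then 1 / (p i * w i) else 0) *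
          ((1 / w i) / (∑ j ∈ U, 1 / w j)) := by
  classical
  have hwU : ∀ i ∈ U, 0 < w i := fun i hi => hw i (Finset.mem_union_left _ hi)
  have hwV : ∀ i ∈ V, 0 < w i := fun i hi => hw i (Finset.mem_union_right _ hi)
  have hpU : ∀ i ∈ U, 0 < p i := fun i hi => hp i (Finset.mem_union_left _ hi)
  have hpV : ∀ i ∈ V, 0 < p i := fun i hi => hp i (Finset.mem_union_right _ hi)
  set A := ∑ i ∈ V, 1 / w i with hA_def
  set B := ∑ i ∈ U, 1 / w i with hB_def
  set P := ∑ j ∈ V, p j with hP_def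
  set R₁ := ∑ i ∈ V, 1 / (p i * w i) with hR₁_def
  have hA : 0 < A := Finset.sum_pos (fun i hi => one_div_pos.mpr (hwV i hi)) hV
  have hB : 0 < B := Finset.sum_pos (fun i hi => one_div_pos.mpr (hwU i hi)) hU
  have hP : 0 < P := Finset.sum_pos hpV hV
  have hR₁ : 0 ≤ R₁ := Finset.sum_nonneg fun i hi =>
    le_of_lt (one_div_pos.mpr (mul_pos (hpV i hi) (hwV i hi)))
  have hS : ∑ i ∈ U ∪ V, 1 / w i = B + A := Finset.sum_union hUV
  set U₁ := U.filter (fun i => p i ≤ P) with hU₁_def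
  set U₂ := U.filter (fun i => ¬ p i ≤ P) with hU₂_def
  set T₁ := ∑ i ∈ U₁, 1 / (w i ^ 2 * p i) with hT₁_def
  set T₂ := ∑ i ∈ U₂, 1 / (w i ^ 2 * p i) with hT₂_def
  have hT₁ : 0 ≤ T₁ := Finset.sum_nonneg fun i hi => by
    have hi' := Finset.mem_filter.mp hi
    have := hwU i hi'.1; have := hpU i hi'.1; positivity
  have hT : ∑ i ∈ U, 1 / (w i ^ 2 * p i) = T₁ + T₂ :=
    (Finset.sum_filter_add_sum_filter_not _ _ _).symm
  -- rewrite the second RHS sum as T₁ / B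
  have hR₂ : ∑ i ∈ U, (if p i ≤ P then 1 / (p i * w i) else 0) * ((1 / w i) / B)
      = T₁ / B := by
    rw [hT₁_def, Finset.sum_div, hU₁_def, Finset.sum_filter]
    refine Finset.sum_congr rfl fun i hi => ?_
    by_cases h : p i ≤ P
    · simp only [if_pos h]
      have hwi := (hwU i hi).ne'
      have hpi := (hpU i hi).ne'
      field_simp
    · simp [if_neg h]
  rw [hS, hT, hR₂]
  -- bound the two pieces separately
  have hBA : 0 < B + A := by linarith
  have key1 : A * T₁ / ((B + A) * B) ≤ T₁ / B := by
    rw [div_le_div_iff₀ (by positivity) hB]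
    nlinarith [mul_nonneg hT₁ (mul_pos hB hB).le]
  have hsub : U₂ ⊆ U := Finset.filter_subset _ _
  have hT₂B : T₂ ≤ B * B / P := by
    have step : T₂ ≤ (B / P) * ∑ i ∈ U₂, 1 / w i := by
      rw [Finset.mul_sum]
      refine Finset.sum_le_sum fun i hi => ?_
      have hiU := hsub hi
      have hPi : P < p i := lt_of_not_ge (Finset.mem_filter.mp hi).2
      have hwi := hwU i hiU
      have hpi := hpU i hiU
      have hwB : 1 / w i ≤ B :=
        Finset.single_le_sum (fun j hj => le_of_lt (one_div_pos.mpr (hwU j hj))) hiU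
      have h1 : 1 / (w i ^ 2 * p i) = (1 / w i) * (1 / w i) * (1 / p i) := by
        rw [pow_two]; simp [mul_inv]; ring
      rw [h1]
      have h2 : 1 / p i ≤ 1 / P := one_div_le_one_div_of_le hP (le_of_lt hPi)
      have hwinv : 0 < 1 / w i := one_div_pos.mpr hwi
      calc (1 / w i) * (1 / w i) * (1 / p i)
          ≤ (1 / w i) * B * (1 / P) := by
            apply mul_le_mul (mul_le_mul_of_nonneg_left hwB (le_of_lt hwinv)) h2
              (by positivity) (by positivity)
        _ = B / P * (1 / w i) := by ring
    have hsum : ∑ i ∈ U₂, 1 / w i ≤ B := by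
      refine Finset.sum_le_sum_of_subset_of_nonneg hsub fun i hi _ =>
        le_of_lt (one_div_pos.mpr (hwU i hi))
    calc T₂ ≤ (B / P) * ∑ i ∈ U₂, 1 / w i := step
      _ ≤ (B / P) * B := by
          apply mul_le_mul_of_nonneg_left hsum (by positivity)
      _ = B * B / P := by ring
  have hAPR : A ≤ P * R₁ := by
    have : A = ∑ j ∈ V, p j * (1 / (p j * w j)) := by
      refine Finset.sum_congr rfl fun j hj => ?_
      have hpj := (hpV j hj).ne'
      have hwj := (hwV j hj).ne'
      field_simp
    rw [this, hR₁_def, hP_def]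
    calc ∑ j ∈ V, p j * (1 / (p j * w j))
        ≤ ∑ j ∈ V, p j * (∑ i ∈ V, 1 / (p i * w i)) := by
          refine Finset.sum_le_sum fun j hj => ?_
          apply mul_le_mul_of_nonneg_left _ (le_of_lt (hpV j hj))
          exact Finset.single_le_sum (fun i hi =>
            le_of_lt (one_div_pos.mpr (mul_pos (hpV i hi) (hwV i hi)))) hj
      _ = (∑ j ∈ V, p j) * (∑ i ∈ V, 1 / (p i * w i)) := by
          rw [← Finset.sum_mul]
  have key2 : A * T₂ / ((B + A) * B) ≤ R₁ := by
    have hT₂nn : 0 ≤ T₂ := Finset.sum_nonneg fun i hi => by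
      have hi' := Finset.mem_filter.mp hi
      have := hwU i hi'.1; have := hpU i hi'.1; positivity
    have h1 : A * T₂ / ((B + A) * B) ≤ A * (B * B / P) / ((B + A) * B) := by
      apply div_le_div_of_nonneg_right _ (by positivity)
      exact mul_le_mul_of_nonneg_left hT₂B (le_of_lt hA)
    have h2 : A * (B * B / P) / ((B + A) * B) ≤ A / P := by
      rw [div_le_div_iff₀ (by positivity) hP]
      have e : A * (B * B / P) * P = A * B * B := by field_simp
      calc A * (B * B / P) * P = A * B * B := e
        _ ≤ A * ((B + A) * B) := by nlinarith [mul_nonneg (mul_nonneg hA.le hA.le) hB.le]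
    have h3 : A / P ≤ R₁ := by
      rw [div_le_iff₀ hP]; linarith [hAPR]
    linarith
  have expand : A * (T₁ + T₂) / ((B + A) * B)
      = A * T₁ / ((B + A) * B) + A * T₂ / ((B + A) * B) := by ring
  rw [expand]
  linarith
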